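/- Let (R,m) be a one-dimensional Cohen–Macaulay local ring and I a regular trace ideal. If I = (x):I for some nonzerodivisor x ∈ I, then I ≅ I* = Hom_R(I,R) as R-modules. -/

import Mathlib

open nonZeroDivisors IsLocalRing

/-- The trace ideal of an `R`-module `M`. -/
noncomputable def traceIdeal (R : Type*) [CommRing R] (M : Type*) [AddCommGroup M]
    [Module R M] : Ideal R :=
  ⨆ f : M →ₗ[R] R, LinearMap.range f

/-- Let `(R,m)` be a one-dimensional Cohen–Macaulay local ring and `I` a regular
trace ideal.  If `I = (x) : I` for some nonzerodivisor `x ∈ I`, then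
`I ≅ I* = Hom_R(I,R)` as `R`-modules. -/
theorem trace_self_dual (R : Type*) [CommRing R] [IsLocalRing R] [IsNoetherianRing R]
    (hdim : ringKrullDim R = 1)
    (hCM : ∃ r ∈ maximalIdeal R, r ∈ R⁰)
    (I : Ideal R) (hreg : ∃ x ∈ I, x ∈ R⁰)
    (htrace : traceIdeal R I = I)
    (x : R) (hxI : x ∈ I) (hx : x ∈ R⁰)
    (hcolon : I = (Ideal.span {x}).colon I) :
    Nonempty (I ≃ₗ[R] (I →ₗ[R] R)) := by
  classical
  -- cancellation by the nonzerodivisor x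
  have hcan : ∀ c d : R, x * c = x * d → c = d := by
    intro c d h
    have h0 : (c - d) * x = 0 := by
      rw [sub_mul, mul_comm c, mul_comm d, h, sub_self]
    have := hx.2 _ h0
    exact sub_eq_zero.mp this
  -- every product of elements of I is divisible by x
  have hdiv : ∀ a : I, ∀ b : I, ∃ c, (a : R) * b = x * c := by
    intro a b
    have ha : (a : R) ∈ (Ideal.span {x}).colon I := hcolon ▸ a.2
    have := Submodule.mem_colon.mp ha (b : R) b.2
    rw [smul_eq_mul] at this
    obtain ⟨c, hc⟩ := Ideal.mem_span_singleton'.mp this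
    exact ⟨c, by rw [← hc, mul_comm]⟩
  choose q hq using hdiv
  -- the linear map b ↦ (a*b)/x, for a : I
  have key : ∀ (a : I) (b : I) (c : R), (a : R) * b = x * c → q a b = c := by
    intro a b c h
    exact hcan _ _ ((hq a b).symm.trans h)
  let F : ∀ a : I, I →ₗ[R] R := fun a =>
    { toFun := q a
      map_add' := by
        intro b b'
        refine hcan _ _ ?_
        rw [← hq a (b + b'), mul_add, ← hq a b, ← hq a b']
        push_cast
        ring
      map_smul' := by
        intro r b
        refine hcan _ _ ?_
        simp only [RingHom.id_apply, smul_eq_mul]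
        rw [← hq a (r • b), mul_left_comm, ← hq a b]
        push_cast
        rw [smul_eq_mul]; ring }
  let Ψ : I →ₗ[R] (I →ₗ[R] R) :=
    { toFun := F
      map_add' := by
        intro a a'
        ext b
        simp only [LinearMap.add_apply]
        refine hcan _ _ ?_
        show x * q (a + a') b = x * (q a b + q a' b)
        rw [← hq (a + a') b, mul_add, ← hq a b, ← hq a' b]
        push_cast
        ring
      map_smul' := by
        intro r a
        ext b
        simp only [LinearMap.smul_apply, RingHom.id_apply, smul_eq_mul]
        refine hcan _ _ ?_
        show x * q (r • a) b = x * (r * q a b)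
        rw [← hq (r • a) b, mul_left_comm, ← hq a b]
        push_cast
        rw [smul_eq_mul]; ring }
  have hinj : Function.Injective Ψ := by
    rw [injective_iff_map_eq_zero]
    intro a ha
    have h0 : q a ⟨x, hxI⟩ = 0 := by
      have := congrArg (fun f => f ⟨x, hxI⟩) ha
      simpa [Ψ, F] using this
    have : (a : R) * x = 0 := by
      rw [hq a ⟨x, hxI⟩, h0, mul_zero]
    have := hx.2 _ this
    exact Subtype.ext this
  have hsurj : Function.Surjective Ψ := by
    intro g
    set a0 : R := g ⟨x, hxI⟩ with ha0
    have hkey : ∀ b : I, x * g b = a0 * b := by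
      intro b
      have h1 : x • b = (b : R) • (⟨x, hxI⟩ : I) := by
        ext; simp [mul_comm]
      calc x * g b = g (x • b) := by rw [map_smul]; simp
        _ = (b : R) * a0 := by rw [h1, map_smul]; simp [ha0]
        _ = a0 * b := mul_comm _ _
    have ha0I : a0 ∈ I := by
      rw [hcolon]
      refine Submodule.mem_colon.mpr ?_
      intro p hp
      rw [smul_eq_mul]
      refine Ideal.mem_span_singleton'.mpr ⟨g ⟨p, hp⟩, ?_⟩
      rw [mul_comm, hkey ⟨p, hp⟩]
    refine ⟨⟨a0, ha0I⟩, ?_⟩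
    ext b
    show q ⟨a0, ha0I⟩ b = g b
    exact key _ _ _ (by rw [← hkey b])
  exact ⟨LinearEquiv.ofBijective Ψ ⟨hinj, hsurj⟩⟩
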